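/- Let f : ℝ^p → ℝ be differentiable with G-Lipschitz gradient and let h > 0. Then for every x ∈ ℝ^p, ‖Σ_{i=1}^p ((f(x + h e_i) − f(x))/h) e_i − ∇f(x)‖ ≤ √p · G · h / 2, where {e_i}_{i=1}^p is the canonical basis of ℝ^p. -/

import Mathlib

open scoped RealInnerProductSpace

lemma fd_key {E : Type*} [NormedAddCommGroup E] [InnerProductSpace ℝ E] [CompleteSpace E]
    (f : E → ℝ) (hf : Differentiable ℝ f) (G : ℝ) (hG : 0 ≤ G)
    (hLip : ∀ x y : E, ‖gradient f x - gradient f y‖ ≤ G * ‖x - y‖)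
    (h : ℝ) (hh : 0 < h) (x e : E) (he : ‖e‖ = 1) :
    |f (x + h • e) - f x - h * ⟪gradient f x, e⟫| ≤ G * h ^ 2 / 2 := by
  set φ : ℝ → ℝ := fun t => f (x + t • e) - f x - t * ⟪gradient f x, e⟫ with hφ
  have hφ' : ∀ t : ℝ, HasDerivAt φ (⟪gradient f (x + t • e), e⟫ - ⟪gradient f x, e⟫) t := by
    intro t
    have hline : HasDerivAt (fun t : ℝ => x + t • e) e t := by
      simpa using ((hasDerivAt_id t).smul_const e).const_add x
    have hfd : HasFDerivAt f (InnerProductSpace.toDual ℝ E (gradient f (x + t • e)))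
        (x + t • e) := (hf _).hasGradientAt.hasFDerivAt
    have h1 : HasDerivAt (fun t : ℝ => f (x + t • e)) ⟪gradient f (x + t • e), e⟫ t := by
      exact hfd.comp_hasDerivAt t hline
    exact (h1.sub_const (f x)).sub (hasDerivAt_mul_const ⟪gradient f x, e⟫)
  have hB : ∀ t : ℝ, HasDerivAt (fun t => G * t ^ 2 / 2) (G * t) t := by
    intro t
    have := ((hasDerivAt_pow 2 t).const_mul G).div_const 2
    exact this.congr_deriv (by rw [show (2:ℕ) - 1 = 1 from rfl, pow_one]; push_cast; ring)
  have bound : ∀ t ∈ Set.Ico (0:ℝ) h,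
      ‖⟪gradient f (x + t • e), e⟫ - ⟪gradient f x, e⟫‖ ≤ G * t := by
    intro t ht
    have : ⟪gradient f (x + t • e), e⟫ - ⟪gradient f x, e⟫
        = ⟪gradient f (x + t • e) - gradient f x, e⟫ := by
      rw [inner_sub_left]
    rw [this]
    calc ‖⟪gradient f (x + t • e) - gradient f x, e⟫‖
        ≤ ‖gradient f (x + t • e) - gradient f x‖ * ‖e‖ := norm_inner_le_norm _ _
      _ ≤ (G * ‖(x + t • e) - x‖) * 1 := by
          rw [he]; exact mul_le_mul_of_nonneg_right (hLip _ _) zero_le_one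
      _ = G * t := by
          simp [norm_smul, he, abs_of_nonneg ht.1]
  have main := image_norm_le_of_norm_deriv_right_le_deriv_boundary
    (f := φ) (f' := fun t => ⟪gradient f (x + t • e), e⟫ - ⟪gradient f x, e⟫)
    (a := 0) (b := h)
    (fun t _ => (hφ' t).continuousAt.continuousWithinAt)
    (fun t _ => (hφ' t).hasDerivWithinAt)
    (B := fun t => G * t ^ 2 / 2) (B' := fun t => G * t)
    (by simp [hφ]) (fun t => hB t) bound
  have := main (Set.right_mem_Icc.2 hh.le)
  simpa [hφ, Real.norm_eq_abs] using this

/-- Forward finite-difference gradient estimate for a function with G-Lipschitz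
gradient: the (p+1)-point estimator is within √p·G·h/2 of the true gradient. -/
theorem forward_difference_gradient_error
    (p : ℕ) (f : EuclideanSpace ℝ (Fin p) → ℝ)
    (hf : Differentiable ℝ f)
    (G : ℝ) (hG : 0 < G)
    (hLip : ∀ x y : EuclideanSpace ℝ (Fin p),
      ‖gradient f x - gradient f y‖ ≤ G * ‖x - y‖)
    (h : ℝ) (hh : 0 < h) :
    ∀ x : EuclideanSpace ℝ (Fin p),
      ‖(∑ i : Fin p, ((f (x + h • EuclideanSpace.single i (1:ℝ)) - f x) / h) •
          EuclideanSpace.single i (1:ℝ)) - gradient f x‖ ≤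
        Real.sqrt p * G * h / 2 := by
  intro x
  set v : EuclideanSpace ℝ (Fin p) :=
    (∑ i : Fin p, ((f (x + h • EuclideanSpace.single i (1:ℝ)) - f x) / h) •
      EuclideanSpace.single i (1:ℝ)) - gradient f x with hv
  have hcomp : ∀ i : Fin p, |v i| ≤ G * h / 2 := by
    intro i
    have he : ‖(EuclideanSpace.single i (1:ℝ))‖ = 1 := by
      simp [EuclideanSpace.norm_single]
    have key := fd_key f hf G hG.le hLip h hh x (EuclideanSpace.single i (1:ℝ)) he
    have hinner : ⟪gradient f x, EuclideanSpace.single i (1:ℝ)⟫ = gradient f x i := by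
      rw [EuclideanSpace.inner_single_right]; simp
    have hvi : v i = (f (x + h • EuclideanSpace.single i (1:ℝ)) - f x) / h - gradient f x i := by
      have hp := map_sum (EuclideanSpace.proj (𝕜 := ℝ) i)
        (fun j => ((f (x + h • EuclideanSpace.single j (1:ℝ)) - f x) / h) •
          EuclideanSpace.single j (1:ℝ)) Finset.univ
      simp only [PiLp.proj_apply] at hp
      simp [hv, hp, PiLp.smul_apply, EuclideanSpace.single_apply, smul_eq_mul]
    rw [hvi]
    have : (f (x + h • EuclideanSpace.single i (1:ℝ)) - f x) / h - gradient f x i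
        = (f (x + h • EuclideanSpace.single i (1:ℝ)) - f x - h * gradient f x i) / h := by
      field_simp
    rw [this, abs_div, abs_of_pos hh, div_le_iff₀ hh]
    rw [hinner] at key
    calc |f (x + h • EuclideanSpace.single i (1:ℝ)) - f x - h * gradient f x i|
        ≤ G * h ^ 2 / 2 := key
      _ = G * h / 2 * h := by ring
  have hnn : 0 ≤ G * h / 2 := by positivity
  have hnorm : ‖v‖ ≤ Real.sqrt p * (G * h / 2) := by
    rw [EuclideanSpace.norm_eq]
    have hsum : ∑ i : Fin p, ‖v i‖ ^ 2 ≤ (p : ℝ) * (G * h / 2) ^ 2 := by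
      calc ∑ i : Fin p, ‖v i‖ ^ 2 ≤ ∑ _i : Fin p, (G * h / 2) ^ 2 := by
            apply Finset.sum_le_sum
            intro i _
            exact pow_le_pow_left₀ (norm_nonneg _) (by simpa using hcomp i) 2
        _ = (p : ℝ) * (G * h / 2) ^ 2 := by simp [mul_comm]
    calc Real.sqrt (∑ i : Fin p, ‖v i‖ ^ 2) ≤ Real.sqrt ((p : ℝ) * (G * h / 2) ^ 2) :=
          Real.sqrt_le_sqrt hsum
      _ = Real.sqrt p * (G * h / 2) := by
          rw [Real.sqrt_mul (Nat.cast_nonneg p), Real.sqrt_sq hnn]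
  calc ‖v‖ ≤ Real.sqrt p * (G * h / 2) := hnorm
    _ = Real.sqrt p * G * h / 2 := by ring
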